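/- arXiv:2208.00327 — 2 statements merged into one kernel-verified Lean document; each statement's English description precedes it below -/
import Mathlib

section
/- Glynn's monomial formula: For every m×m complex matrix A = (a_{ij}), every p ∈ ℕ^m, and every z ∈ ℂ^m, ∏_{i=1}^m ( Σ_{j=1}^m a_{ij} z_j )^{p_i} = Σ_{q ∈ ℕ^m, |q| = |p|} (z^q / q!) · Per(A_{p,q}). -/
open BigOperators Matrix

/-- The list of row indices of `A_{p,·}`: each index `i` repeated `p i` times, in order. -/
def repList {m : ℕ} (p : Fin m → ℕ) : List (Fin m) :=
  (List.finRange m).flatMap fun i => List.replicate (p i) i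

lemma repList_length {m : ℕ} (p : Fin m → ℕ) : (repList p).length = ∑ i, p i := by
  simp only [repList, List.length_flatMap, Fin.sum_univ_def]
  congr 1
  apply List.map_congr_left
  intro i _
  simp

/-- The matrix `A_{p,q}`: row `i` repeated `p i` times, column `j` repeated `q j` times. -/
def repMat {m : ℕ} (A : Matrix (Fin m) (Fin m) ℂ) (p q : Fin m → ℕ) :
    Matrix (Fin (∑ i, p i)) (Fin (∑ j, q j)) ℂ :=
  Matrix.of fun r c =>
    A ((repList p).get (Fin.cast (repList_length p).symm r))
      ((repList q).get (Fin.cast (repList_length q).symm c))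

/-- `Per(A_{p,q})`; by convention `0` when the matrix is not square. -/
noncomputable def perRep {m : ℕ} (A : Matrix (Fin m) (Fin m) ℂ) (p q : Fin m → ℕ) : ℂ :=
  if h : (∑ i, p i) = (∑ j, q j) then
    (Matrix.of fun r c : Fin (∑ i, p i) => repMat A p q r (Fin.cast h c)).permanent
  else 0

/-! ### Auxiliary lemmas -/

lemma card_filter_get {γ : Type*} [DecidableEq γ] (l : List γ) (j : γ) :
    (Finset.univ.filter fun i : Fin l.length => l.get i = j).card = l.count j := by
  induction l with
  | nil => simp
  | cons a t ih =>
    rw [Finset.card_filter]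
    erw [Fin.sum_univ_succ (f := fun i : Fin (t.length + 1) => if (a :: t).get i = j then 1 else 0)]
    rw [← Finset.card_filter]
    simp only [List.get_eq_getElem, List.getElem_cons_zero, Fin.val_succ, List.getElem_cons_succ] at *
    rw [ih, List.count_cons]
    rcases eq_or_ne a j with h | h <;> simp [h, add_comm]

lemma count_repList {m : ℕ} (q : Fin m → ℕ) (j : Fin m) :
    (repList q).count j = q j := by
  unfold repList
  rw [List.count_flatMap]
  simp only [Function.comp_def, List.count_replicate]
  rw [← Fin.sum_univ_def]
  simp [Finset.sum_ite_eq]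

lemma prod_get {γ M : Type*} [CommMonoid M] (l : List γ) (g : γ → M) :
    ∏ r : Fin l.length, g (l.get r) = (l.map g).prod := by
  rw [← Fin.prod_ofFn]
  congr 1
  conv_rhs => rw [← List.ofFn_get l, List.map_ofFn]
  rfl

lemma prod_repList {m : ℕ} (p : Fin m → ℕ) {M : Type*} [CommMonoid M] (g : Fin m → M) :
    ∏ r : Fin (∑ i, p i), g ((repList p).get (Fin.cast (repList_length p).symm r))
      = ∏ i, (g i) ^ (p i) := by
  rw [Fin.prod_congr' (fun r => g ((repList p).get r)) (repList_length p).symm, prod_get]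
  unfold repList
  rw [List.map_flatMap]
  simp only [List.map_replicate]
  rw [List.flatMap, List.prod_flatten, List.map_map]
  simp only [Function.comp_def, List.prod_replicate]
  rw [← Fin.prod_univ_def]

section PermCount
variable {α β : Type*} [Fintype α] [DecidableEq α] [Fintype β] [DecidableEq β]

/-- Permutations intertwining `κ` and `f` correspond to families of fiber bijections. -/
def permFiberEquiv (κ f : α → β) :
    {σ : Equiv.Perm α // ∀ r, κ (σ r) = f r} ≃ (∀ j, {r // f r = j} ≃ {r // κ r = j}) where
  toFun σ j :=
    { toFun := fun r => ⟨σ.1 r.1, by rw [σ.2]; exact r.2⟩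
      invFun := fun s => ⟨σ.1.symm s.1, by
        have h := σ.2 (σ.1.symm s.1); rw [Equiv.apply_symm_apply] at h; rw [← h]; exact s.2⟩
      left_inv := fun r => Subtype.ext (σ.1.symm_apply_apply r.1)
      right_inv := fun s => Subtype.ext (σ.1.apply_symm_apply s.1) }
  invFun e := ⟨Equiv.ofFiberEquiv e, fun r => Equiv.ofFiberEquiv_map e r⟩
  left_inv := by
    rintro ⟨σ, hσ⟩
    apply Subtype.ext
    apply Equiv.ext
    intro r
    simp [Equiv.ofFiberEquiv]
  right_inv := by
    intro e
    funext j
    apply Equiv.ext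
    rintro ⟨r, hr⟩
    apply Subtype.ext
    subst hr
    simp [Equiv.ofFiberEquiv, Equiv.sigmaFiberEquiv]

lemma card_perm_fiber (κ f : α → β)
    (h : ∀ j, Fintype.card {r // f r = j} = Fintype.card {r // κ r = j}) :
    Fintype.card {σ : Equiv.Perm α // ∀ r, κ (σ r) = f r}
      = ∏ j, (Fintype.card {r // κ r = j}).factorial := by
  rw [Fintype.card_congr (permFiberEquiv κ f), Fintype.card_pi]
  exact Finset.prod_congr rfl fun j _ =>
    (Fintype.card_equiv (Fintype.equivOfCardEq (h j))).trans (by rw [h j])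

lemma fiber_card_comp (κ : α → β) (σ : Equiv.Perm α) (j : β) :
    Fintype.card {r // κ (σ r) = j} = Fintype.card {r // κ r = j} :=
  Fintype.card_congr (σ.subtypeEquiv fun _ => Iff.rfl)

lemma card_filter_perm (κ f : α → β) :
    (Finset.univ.filter fun σ : Equiv.Perm α => ∀ r, κ (σ r) = f r).card =
      if ∀ j, Fintype.card {r // f r = j} = Fintype.card {r // κ r = j}
      then ∏ j, (Fintype.card {r // κ r = j}).factorial else 0 := by
  rw [← Fintype.card_subtype]
  split_ifs with h
  · exact card_perm_fiber κ f h
  · rw [Fintype.card_eq_zero_iff]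
    refine ⟨fun x => h fun j => ?_⟩
    obtain ⟨σ, hσ⟩ := x
    calc Fintype.card {r // f r = j}
        = Fintype.card {r // κ (σ r) = j} :=
          Fintype.card_congr (Equiv.subtypeEquivRight fun r => by rw [hσ r])
      _ = Fintype.card {r // κ r = j} := fiber_card_comp κ σ j

lemma sum_card_fiber (f : α → β) :
    ∑ j, Fintype.card {r // f r = j} = Fintype.card α := by
  simp only [Fintype.card_subtype]
  rw [← Finset.card_univ (α := α),
    Finset.card_eq_sum_card_fiberwise (fun x _ => Finset.mem_univ (f x))]

end PermCount

lemma card_fiber_repList {m n : ℕ} (q : Fin m → ℕ) (h : n = (repList q).length) (j : Fin m) :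
    Fintype.card {c : Fin n // (repList q).get (Fin.cast h c) = j} = q j := by
  have e : {c : Fin n // (repList q).get (Fin.cast h c) = j}
      ≃ {c' : Fin (repList q).length // (repList q).get c' = j} :=
    (finCongr h).subtypeEquiv fun c => Iff.rfl
  rw [Fintype.card_congr e, Fintype.card_subtype, card_filter_get, count_repList]

/-- **Glynn's monomial formula.** -/
theorem glynn_monomial_formula (m : ℕ) (A : Matrix (Fin m) (Fin m) ℂ)
    (p : Fin m → ℕ) (z : Fin m → ℂ) :
    ∏ i, (∑ j, A i j * z j) ^ p i =
      ∑ q ∈ Finset.Nat.antidiagonalTuple m (∑ i, p i),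
        (∏ j, z j ^ q j) / (∏ j, (Nat.factorial (q j) : ℂ)) * perRep A p q := by
  classical
  set ρ : Fin (∑ i, p i) → Fin m :=
    fun r => (repList p).get (Fin.cast (repList_length p).symm r) with hρ
  set G : (Fin (∑ i, p i) → Fin m) → ℂ := fun f => ∏ r, A (ρ r) (f r) with hG
  set cnt : (Fin (∑ i, p i) → Fin m) → Fin m → ℕ :=
    fun f j => Fintype.card {r // f r = j} with hcnt
  -- Step 1 : expand the left-hand side
  have step1 : ∏ i, (∑ j, A i j * z j) ^ p i
      = ∑ f : Fin (∑ i, p i) → Fin m, G f * ∏ j, z j ^ cnt f j := by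
    rw [← prod_repList p (fun i => ∑ j, A i j * z j)]
    rw [show (∏ r : Fin (∑ i, p i), ∑ j, A (ρ r) j * z j)
        = ∑ f ∈ Fintype.piFinset (fun _ : Fin (∑ i, p i) => (Finset.univ : Finset (Fin m))),
            ∏ r, A (ρ r) (f r) * z (f r) from Finset.prod_univ_sum _ _]
    rw [Fintype.piFinset_univ]
    refine Finset.sum_congr rfl fun f _ => ?_
    rw [Finset.prod_mul_distrib]
    congr 1
    rw [← Fintype.prod_fiberwise' f z]
    exact Finset.prod_congr rfl fun j _ => by rw [Finset.prod_const, Finset.card_univ]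
  -- Step 2 : expand each permanent
  have step2 : ∀ q ∈ Finset.Nat.antidiagonalTuple m (∑ i, p i),
      perRep A p q = ∑ f : Fin (∑ i, p i) → Fin m,
        (((if ∀ j, cnt f j = q j then ∏ j, (q j).factorial else 0 : ℕ) : ℂ)) * G f := by
    intro q hq
    have hq' : ∑ j, q j = ∑ i, p i := Finset.Nat.mem_antidiagonalTuple.mp hq
    have hpq : (∑ i, p i) = (∑ j, q j) := hq'.symm
    have hlen : (∑ i, p i) = (repList q).length := hpq.trans (repList_length q).symm
    set κ : Fin (∑ i, p i) → Fin m := fun c => (repList q).get (Fin.cast hlen c) with hκ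
    have hκcard : ∀ j, Fintype.card {c // κ c = j} = q j := fun j =>
      card_fiber_repList q hlen j
    unfold perRep
    rw [dif_pos hpq]
    rw [← Matrix.permanent_transpose]
    have hperm : (Matrix.of fun r c : Fin (∑ i, p i) =>
        repMat A p q r (Fin.cast hpq c))ᵀ.permanent
        = ∑ σ : Equiv.Perm (Fin (∑ i, p i)), ∏ r, A (ρ r) (κ (σ r)) := by
      unfold Matrix.permanent
      refine Finset.sum_congr rfl fun σ _ => Finset.prod_congr rfl fun r _ => rfl
    rw [hperm]
    -- regroup the permutations by the induced function
    calc (∑ σ : Equiv.Perm (Fin (∑ i, p i)), ∏ r, A (ρ r) (κ (σ r)))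
        = ∑ σ : Equiv.Perm (Fin (∑ i, p i)), G (fun r => κ (σ r)) := rfl
      _ = ∑ f : Fin (∑ i, p i) → Fin m,
            ∑ _σ ∈ Finset.univ.filter
              (fun σ : Equiv.Perm (Fin (∑ i, p i)) => (fun r => κ (σ r)) = f), G f :=
          (Finset.sum_fiberwise' _ _ _).symm
      _ = ∑ f : Fin (∑ i, p i) → Fin m,
            (((if ∀ j, cnt f j = q j then ∏ j, (q j).factorial else 0 : ℕ) : ℂ)) * G f := by
          refine Finset.sum_congr rfl fun f _ => ?_
          rw [Finset.sum_const, nsmul_eq_mul]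
          congr 1
          have h1 : (Finset.univ.filter
              (fun σ : Equiv.Perm (Fin (∑ i, p i)) => (fun r => κ (σ r)) = f))
              = Finset.univ.filter
                (fun σ : Equiv.Perm (Fin (∑ i, p i)) => ∀ r, κ (σ r) = f r) := by
            apply Finset.filter_congr
            intro σ _
            simp [funext_iff]
          rw [h1]
          have h2 := card_filter_perm κ f
          simp only [hκcard] at h2
          have h3 : (Finset.filter
              (fun σ : Equiv.Perm (Fin (∑ i, p i)) => ∀ r, κ (σ r) = f r)
              Finset.univ).card
              = if ∀ j, cnt f j = q j then ∏ j, (q j).factorial else 0 := by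
            convert h2 using 2
            ext σ
            simp
          rw [h3]
  -- Combine
  have hR : (∑ q ∈ Finset.Nat.antidiagonalTuple m (∑ i, p i),
        (∏ j, z j ^ q j) / (∏ j, (Nat.factorial (q j) : ℂ)) * perRep A p q)
      = ∑ q ∈ Finset.Nat.antidiagonalTuple m (∑ i, p i),
          ∑ f : Fin (∑ i, p i) → Fin m,
            (∏ j, z j ^ q j) / (∏ j, (Nat.factorial (q j) : ℂ)) *
              ((((if ∀ j, cnt f j = q j then ∏ j, (q j).factorial else 0 : ℕ) : ℂ)) * G f) :=
    Finset.sum_congr rfl fun q hq => by rw [step2 q hq, Finset.mul_sum]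
  rw [step1, hR, Finset.sum_comm]
  refine Finset.sum_congr rfl fun f _ => ?_
  have hmem : cnt f ∈ Finset.Nat.antidiagonalTuple m (∑ i, p i) := by
    rw [Finset.Nat.mem_antidiagonalTuple]
    simp only [hcnt]
    rw [sum_card_fiber]
    simp
  have key : ∀ q ∈ Finset.Nat.antidiagonalTuple m (∑ i, p i),
      (∏ j, z j ^ q j) / (∏ j, ((q j).factorial : ℂ)) *
        ((((if ∀ j, cnt f j = q j then ∏ j, (q j).factorial else 0 : ℕ) : ℂ)) * G f)
      = if q = cnt f then (∏ j, z j ^ cnt f j) * G f else 0 := by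
    intro q _
    by_cases h : q = cnt f
    · subst h
      rw [if_pos (fun j => rfl), if_pos rfl]
      have hne : (∏ j, (((cnt f j).factorial : ℂ))) ≠ 0 :=
        Finset.prod_ne_zero_iff.mpr fun j _ =>
          Nat.cast_ne_zero.mpr (Nat.factorial_ne_zero _)
      rw [Nat.cast_prod]
      field_simp
    · rw [if_neg h, if_neg (fun hc => h (funext fun j => (hc j).symm)),
        Nat.cast_zero, zero_mul, mul_zero]
  rw [Finset.sum_congr rfl key, Finset.sum_ite_eq' _ (cnt f), if_pos hmem, mul_comm]
end

section
/- Permanent as a monomial coefficient of a bilinear form power: Let A be an m×m complex matrix, n ∈ ℕ, and p, q ∈ ℕ^m with |p| = |q| = n. Then the coefficient of x^p y^q in the polynomial (x^T A y)^n = (Σ_{i,j} x_i a_{ij} y_j)^n in the 2m variables x_1,…,x_m,y_1,…,y_m equals (n! / (p! q!)) · Per(A_{p,q}); equivalently, Per(A_{p,q}) = (p! q! / n!) · [x^p y^q] (x^T A y)^n. -/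
open BigOperators Matrix Finset Equiv MvPolynomial

-- assume aux file content; for testing, just re-import by pasting

open BigOperators Matrix

section Aux
open Finset Equiv MvPolynomial

variable {m n : ℕ}

/-- Number of preimages of `i` under `g`. -/
def cnt {α : Type*} [Fintype α] [DecidableEq α] {m : ℕ} (g : α → Fin m) (i : Fin m) : ℕ :=
  #(Finset.univ.filter fun k => g k = i)

lemma cnt_card {α : Type*} [Fintype α] [DecidableEq α] (g : α → Fin m) (i : Fin m) :
    Fintype.card {k // g k = i} = cnt g i := Fintype.card_subtype _

lemma cnt_comp_equiv {α β : Type*} [Fintype α] [DecidableEq α] [Fintype β] [DecidableEq β]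
    (g : α → Fin m) (e : β ≃ α) (i : Fin m) : cnt (g ∘ e) i = cnt g i := by
  rw [← cnt_card, ← cnt_card]
  exact Fintype.card_congr (e.subtypeEquiv fun k => Iff.rfl)

lemma exists_comp_eq {α : Type*} [Fintype α] [DecidableEq α] {g h : α → Fin m}
    (hc : ∀ i, cnt g i = cnt h i) : ∃ π : Equiv.Perm α, ∀ k, h (π k) = g k := by
  have e : ∀ i, {k // g k = i} ≃ {k // h k = i} := fun i =>
    Fintype.equivOfCardEq (by rw [cnt_card, cnt_card, hc])
  refine ⟨(sigmaFiberEquiv g).symm.trans ((Equiv.sigmaCongrRight e).trans (sigmaFiberEquiv h)),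
    fun k => ?_⟩
  exact (e (g k) ⟨k, rfl⟩).prop

lemma card_comp_eq {α : Type*} [Fintype α] [DecidableEq α] {g h : α → Fin m}
    (hc : ∀ i, cnt g i = cnt h i) :
    Fintype.card {π : Equiv.Perm α // h ∘ π = g} = ∏ i, (cnt g i).factorial := by
  obtain ⟨π₀, hπ₀⟩ := exists_comp_eq hc
  have E : {π : Equiv.Perm α // h ∘ π = g} ≃ {τ : Equiv.Perm α // h ∘ τ = h} := by
    refine ⟨fun π => ⟨π₀.symm.trans π.1, funext fun k => ?_⟩,
      fun τ => ⟨π₀.trans τ.1, funext fun k => ?_⟩, fun π => ?_, fun τ => ?_⟩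
    · have := congrFun π.2 (π₀.symm k)
      simp only [Function.comp_apply] at this ⊢
      simp only [Equiv.trans_apply, this, ← hπ₀ (π₀.symm k), Equiv.apply_symm_apply]
    · have := congrFun τ.2 (π₀ k)
      simp only [Function.comp_apply] at this ⊢
      simp only [Equiv.trans_apply, this, hπ₀ k]
    · ext x; simp
    · ext x; simp
  rw [Fintype.card_congr E, DomMulAct.stabilizer_card]
  exact Finset.prod_congr rfl fun i _ => by rw [cnt_card, ← hc i]

lemma repList_count (p : Fin m → ℕ) (i : Fin m) : (repList p).count i = p i := by
  rw [repList, List.count_flatMap]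
  simp only [Function.comp_def]
  have : ((List.finRange m).map fun x => (List.replicate (p x) x).count i) =
      (List.finRange m).map fun x => if x = i then p x else 0 := by
    apply List.map_congr_left
    intro x _
    rw [List.count_replicate]
    simp [beq_iff_eq]
  rw [this, ← Fin.sum_univ_def]
  simp

lemma card_filter_get_s11 (L : List (Fin m)) (a : Fin m) :
    #(Finset.univ.filter fun k : Fin L.length => L.get k = a) = L.count a := by
  induction L with
  | nil => simp
  | cons x t ih =>
    rw [Finset.card_filter] at ih ⊢
    simp only [List.length_cons]
    rw [Fin.sum_univ_succ]
    simp only [List.get_eq_getElem, Fin.val_succ, List.getElem_cons_succ,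
      Fin.val_zero, List.getElem_cons_zero]
    simp only [List.get_eq_getElem] at ih
    rw [ih, List.count_cons]
    by_cases h : x = a <;> simp [h, beq_iff_eq, add_comm, Ne.symm]

lemma prod_monomial {ι σ R : Type*} [CommSemiring R] (s : Finset ι) (d : ι → σ →₀ ℕ) (a : ι → R) :
    ∏ k ∈ s, MvPolynomial.monomial (d k) (a k) =
      MvPolynomial.monomial (∑ k ∈ s, d k) (∏ k ∈ s, a k) := by
  classical
  induction s using Finset.cons_induction with
  | empty => simp
  | cons i s hi ih =>
    rw [Finset.prod_cons, Finset.sum_cons, Finset.prod_cons, ih, MvPolynomial.monomial_mul]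

end Aux

section Main
open Finset Equiv MvPolynomial

lemma main_expand {m n : ℕ} (A : Matrix (Fin m) (Fin m) ℂ) (r c : Fin n → Fin m) :
    ((∏ i, ((cnt r i).factorial : ℂ)) * ∏ j, ((cnt c j).factorial : ℂ)) *
      MvPolynomial.coeff (Finsupp.equivFunOnFinite.symm (Sum.elim (cnt r) (cnt c)))
        ((∑ i, ∑ j, MvPolynomial.X (Sum.inl i) * MvPolynomial.C (A i j) *
            MvPolynomial.X (Sum.inr j) : MvPolynomial (Fin m ⊕ Fin m) ℂ) ^ n) =
      (n.factorial : ℂ) * ∑ σ : Equiv.Perm (Fin n), ∏ k, A (r k) (c (σ k)) := by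
  classical
  set e : Fin m × Fin m → (Fin m ⊕ Fin m) →₀ ℕ := fun z =>
    Finsupp.single (Sum.inl z.1) 1 + Finsupp.single (Sum.inr z.2) 1 with he
  have hT : (∑ i, ∑ j, X (Sum.inl i) * C (A i j) * X (Sum.inr j)
      : MvPolynomial (Fin m ⊕ Fin m) ℂ) = ∑ z : Fin m × Fin m, monomial (e z) (A z.1 z.2) := by
    conv_rhs => rw [Fintype.sum_prod_type]
    refine Finset.sum_congr rfl fun z _ => Finset.sum_congr rfl fun w _ => ?_
    have hx : ∀ s : Fin m ⊕ Fin m, (X s : MvPolynomial (Fin m ⊕ Fin m) ℂ)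
        = monomial (Finsupp.single s 1) 1 := fun s => by
      rw [← pow_one (X s), MvPolynomial.X_pow_eq_monomial]
    rw [hx, hx, MvPolynomial.C_apply, MvPolynomial.monomial_mul, MvPolynomial.monomial_mul, he]
    simp
  rw [hT, Fintype.sum_pow]
  have hmon : ∀ f : Fin n → Fin m × Fin m,
      (∏ k, monomial (e (f k)) (A (f k).1 (f k).2)) =
        monomial (∑ k, e (f k)) (∏ k, A (f k).1 (f k).2) := fun f => prod_monomial _ _ _
  simp only [hmon]
  rw [MvPolynomial.coeff_sum]
  simp only [MvPolynomial.coeff_monomial]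
  -- characterize the condition
  have hcond : ∀ f : Fin n → Fin m × Fin m,
      ((∑ k, e (f k)) = Finsupp.equivFunOnFinite.symm (Sum.elim (cnt r) (cnt c))) ↔
      ((∀ i, cnt (fun k => (f k).1) i = cnt r i) ∧
        (∀ j, cnt (fun k => (f k).2) j = cnt c j)) := by
    intro f
    have h1 : ∀ i : Fin m, (∑ k, e (f k)) (Sum.inl i) = cnt (fun k => (f k).1) i := by
      intro i
      rw [Finsupp.finset_sum_apply, cnt, Finset.card_filter]
      refine Finset.sum_congr rfl fun k _ => ?_
      simp [he, Finsupp.single_apply]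
    have h2 : ∀ j : Fin m, (∑ k, e (f k)) (Sum.inr j) = cnt (fun k => (f k).2) j := by
      intro j
      rw [Finsupp.finset_sum_apply, cnt, Finset.card_filter]
      refine Finset.sum_congr rfl fun k _ => ?_
      simp [he, Finsupp.single_apply]
    rw [Finsupp.ext_iff, Sum.forall]
    simp only [h1, h2, Finsupp.coe_equivFunOnFinite_symm, Sum.elim_inl, Sum.elim_inr]
  simp only [hcond]
  rw [← Finset.sum_filter]
  -- the image description
  set Φ : Equiv.Perm (Fin n) × Equiv.Perm (Fin n) → (Fin n → Fin m × Fin m) :=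
    fun πσ k => (r (πσ.1 k), c (πσ.2 k)) with hΦ
  have himage : Finset.image Φ Finset.univ =
      Finset.univ.filter (fun f : Fin n → Fin m × Fin m =>
        (∀ i, cnt (fun k => (f k).1) i = cnt r i) ∧
          (∀ j, cnt (fun k => (f k).2) j = cnt c j)) := by
    ext f
    simp only [Finset.mem_image, Finset.mem_filter, Finset.mem_univ, true_and]
    constructor
    · rintro ⟨⟨π, σ⟩, -, rfl⟩
      exact ⟨fun i => cnt_comp_equiv r π i, fun j => cnt_comp_equiv c σ j⟩
    · rintro ⟨hh1, hh2⟩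
      obtain ⟨π, hπ⟩ := exists_comp_eq (g := fun k => (f k).1) (h := r) hh1
      obtain ⟨σ, hσ⟩ := exists_comp_eq (g := fun k => (f k).2) (h := c) hh2
      first
      | exact ⟨(π, σ), Finset.mem_univ _, funext fun k => Prod.ext_iff.mpr ⟨hπ k, hσ k⟩⟩
      | exact ⟨(π, σ), funext fun k => Prod.ext_iff.mpr ⟨hπ k, hσ k⟩⟩
  have hfiber : ∀ f ∈ Finset.univ.filter (fun f : Fin n → Fin m × Fin m =>
      (∀ i, cnt (fun k => (f k).1) i = cnt r i) ∧
        (∀ j, cnt (fun k => (f k).2) j = cnt c j)),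
      #(Finset.univ.filter fun πσ => Φ πσ = f)
        = (∏ i, (cnt r i).factorial) * ∏ j, (cnt c j).factorial := by
    intro f hf
    rw [Finset.mem_filter] at hf
    obtain ⟨-, hh1, hh2⟩ := hf
    have hpred : ∀ πσ : Equiv.Perm (Fin n) × Equiv.Perm (Fin n),
        (Φ πσ = f) ↔ ((r ∘ πσ.1 = fun k => (f k).1) ∧ (c ∘ πσ.2 = fun k => (f k).2)) := by
      intro πσ
      rw [_root_.funext_iff]
      constructor
      · intro h
        exact ⟨funext fun k => congrArg Prod.fst (h k), funext fun k => congrArg Prod.snd (h k)⟩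
      · rintro ⟨ha, hb⟩ k
        exact Prod.ext_iff.mpr ⟨congrFun ha k, congrFun hb k⟩
    rw [Finset.filter_congr fun x _ => hpred x,
      show (Finset.univ : Finset (Equiv.Perm (Fin n) × Equiv.Perm (Fin n)))
        = Finset.univ ×ˢ Finset.univ from (Finset.univ_product_univ).symm,
      Finset.filter_product (fun π : Equiv.Perm (Fin n) => r ∘ ⇑π = fun k => (f k).1)
        (fun σ : Equiv.Perm (Fin n) => c ∘ ⇑σ = fun k => (f k).2),
      Finset.card_product]
    congr 1
    · rw [← Fintype.card_subtype, card_comp_eq hh1]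
      exact Finset.prod_congr rfl fun i _ => by rw [hh1]
    · rw [← Fintype.card_subtype, card_comp_eq hh2]
      exact Finset.prod_congr rfl fun j _ => by rw [hh2]
  have hsum : (∑ πσ : Equiv.Perm (Fin n) × Equiv.Perm (Fin n),
        ∏ k, A ((Φ πσ) k).1 ((Φ πσ) k).2)
      = ((∏ i, (cnt r i).factorial) * ∏ j, (cnt c j).factorial) •
          ∑ f ∈ Finset.univ.filter (fun f : Fin n → Fin m × Fin m =>
            (∀ i, cnt (fun k => (f k).1) i = cnt r i) ∧
              (∀ j, cnt (fun k => (f k).2) j = cnt c j)), ∏ k, A (f k).1 (f k).2 := by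
    rw [Finset.sum_comp (fun f : Fin n → Fin m × Fin m => ∏ k, A (f k).1 (f k).2) Φ, himage,
      Finset.smul_sum]
    exact Finset.sum_congr rfl fun f hf => by rw [hfiber f hf]
  -- permutation side
  have hps : ∀ π : Equiv.Perm (Fin n), (∑ σ : Equiv.Perm (Fin n), ∏ k, A (r (π k)) (c (σ k)))
      = ∑ σ : Equiv.Perm (Fin n), ∏ k, A (r k) (c (σ k)) := by
    intro π
    have h1 : ∀ σ : Equiv.Perm (Fin n), (∏ k, A (r (π k)) (c (σ k)))
        = ∏ k, A (r k) (c ((σ * π⁻¹) k)) := by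
      intro σ
      rw [← Equiv.prod_comp π (fun k => A (r k) (c ((σ * π⁻¹) k)))]
      refine Finset.prod_congr rfl fun k _ => ?_
      congr 2
      simp
    simp only [h1]
    exact Equiv.sum_comp (Equiv.mulRight π⁻¹) (fun σ => ∏ k, A (r k) (c (σ k)))
  have hperm : (∑ πσ : Equiv.Perm (Fin n) × Equiv.Perm (Fin n),
        ∏ k, A ((Φ πσ) k).1 ((Φ πσ) k).2)
      = (n.factorial : ℂ) * ∑ σ : Equiv.Perm (Fin n), ∏ k, A (r k) (c (σ k)) := by
    rw [Fintype.sum_prod_type]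
    calc (∑ π : Equiv.Perm (Fin n), ∑ σ : Equiv.Perm (Fin n),
            ∏ k, A ((Φ (π, σ)) k).1 ((Φ (π, σ)) k).2)
        = ∑ _π : Equiv.Perm (Fin n), ∑ σ : Equiv.Perm (Fin n), ∏ k, A (r k) (c (σ k)) := by
          exact Finset.sum_congr rfl fun π _ => hps π
      _ = (n.factorial : ℂ) * ∑ σ : Equiv.Perm (Fin n), ∏ k, A (r k) (c (σ k)) := by
          rw [Finset.sum_const, Finset.card_univ, Fintype.card_perm, Fintype.card_fin,
            nsmul_eq_mul]
  rw [← hperm, hsum, nsmul_eq_mul]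
  push_cast
  ring
end Main

/-- **Permanent as a monomial coefficient of a bilinear form power.** -/
theorem permanent_coeff_bilinear_power (m n : ℕ) (A : Matrix (Fin m) (Fin m) ℂ)
    (p q : Fin m → ℕ) (hp : ∑ i, p i = n) (hq : ∑ j, q j = n) :
    MvPolynomial.coeff (Finsupp.equivFunOnFinite.symm (Sum.elim p q))
        ((∑ i, ∑ j, MvPolynomial.X (Sum.inl i) * MvPolynomial.C (A i j) *
            MvPolynomial.X (Sum.inr j) : MvPolynomial (Fin m ⊕ Fin m) ℂ) ^ n) =
      (Nat.factorial n : ℂ) /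
          ((∏ i, (Nat.factorial (p i) : ℂ)) * ∏ j, (Nat.factorial (q j) : ℂ)) *
        perRep A p q ∧
    perRep A p q =
      ((∏ i, (Nat.factorial (p i) : ℂ)) * ∏ j, (Nat.factorial (q j) : ℂ)) /
          (Nat.factorial n : ℂ) *
        MvPolynomial.coeff (Finsupp.equivFunOnFinite.symm (Sum.elim p q))
          ((∑ i, ∑ j, MvPolynomial.X (Sum.inl i) * MvPolynomial.C (A i j) *
              MvPolynomial.X (Sum.inr j) : MvPolynomial (Fin m ⊕ Fin m) ℂ) ^ n) := by
  classical
  subst hp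
  set r : Fin (∑ i, p i) → Fin m :=
    fun k => (repList p).get (Fin.cast (repList_length p).symm k) with hr_def
  set c : Fin (∑ i, p i) → Fin m :=
    fun k => (repList q).get (Fin.cast (repList_length q).symm (Fin.cast hq.symm k)) with hc_def
  have hgetp : ∀ i, cnt (repList p).get i = p i := by
    intro i
    rw [cnt, card_filter_get_s11, repList_count]
  have hgetq : ∀ i, cnt (repList q).get i = q i := by
    intro i
    rw [cnt, card_filter_get_s11, repList_count]
  have hr : cnt r = p := by
    funext i
    rw [← hgetp i]
    exact cnt_comp_equiv (repList p).get (finCongr (repList_length p).symm) i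
  have hc : cnt c = q := by
    funext i
    rw [← hgetq i]
    have step1 : cnt ((repList q).get ∘ (finCongr (repList_length q).symm)) i
        = cnt (repList q).get i :=
      cnt_comp_equiv (repList q).get (finCongr (repList_length q).symm) i
    have step2 : cnt (((repList q).get ∘ (finCongr (repList_length q).symm)) ∘
        (finCongr hq.symm)) i = cnt ((repList q).get ∘ (finCongr (repList_length q).symm)) i :=
      cnt_comp_equiv _ (finCongr hq.symm) i
    exact step2.trans step1
  have hper : perRep A p q = ∑ σ : Equiv.Perm (Fin (∑ i, p i)), ∏ k, A (r (σ k)) (c k) := by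
    rw [perRep, dif_pos hq.symm]
    rfl
  have hflip : (∑ σ : Equiv.Perm (Fin (∑ i, p i)), ∏ k, A (r (σ k)) (c k))
      = ∑ σ : Equiv.Perm (Fin (∑ i, p i)), ∏ k, A (r k) (c (σ k)) := by
    have h1 : ∀ σ : Equiv.Perm (Fin (∑ i, p i)), (∏ k, A (r (σ k)) (c k))
        = ∏ k, A (r k) (c (σ⁻¹ k)) := by
      intro σ
      rw [← Equiv.prod_comp σ (fun k => A (r k) (c (σ⁻¹ k)))]
      exact Finset.prod_congr rfl fun k _ => by simp
    simp only [h1]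
    exact Equiv.sum_comp (Equiv.inv (Equiv.Perm (Fin (∑ i, p i))))
      (fun σ => ∏ k, A (r k) (c (σ k)))
  have hmain := main_expand A r c
  rw [hr, hc] at hmain
  have hPer : perRep A p q = ∑ σ : Equiv.Perm (Fin (∑ i, p i)), ∏ k, A (r k) (c (σ k)) :=
    hper.trans hflip
  have hPne : (∏ i, ((p i).factorial : ℂ)) ≠ 0 :=
    Finset.prod_ne_zero_iff.mpr fun i _ => Nat.cast_ne_zero.mpr (Nat.factorial_ne_zero _)
  have hQne : (∏ j, ((q j).factorial : ℂ)) ≠ 0 :=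
    Finset.prod_ne_zero_iff.mpr fun j _ => Nat.cast_ne_zero.mpr (Nat.factorial_ne_zero _)
  have hNne : (((∑ i, p i).factorial : ℂ)) ≠ 0 :=
    Nat.cast_ne_zero.mpr (Nat.factorial_ne_zero _)
  constructor
  · rw [hPer]
    field_simp
    linear_combination hmain
  · rw [hPer]
    field_simp
    linear_combination -hmain
end
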